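/- Let K be a field, n ≥ 1, and ℓ ∈ ℤ. Then the following holds: for every r ≥ 1, every d ∈ ℕ, and every nonzero homogeneous polynomial f ∈ K[x_1,…,x_n] of degree d, the identity E_r·f = binom(d−ℓ, r)·f holds (binomial taken via its image in K) if and only if ℓ = 0. (This expresses that the degree-shifted graded module R(ℓ) is Eulerian if and only if ℓ = 0.) -/

import Mathlib

open Finset


/-- The divided-power partial derivative `∂_i^{[j]}` on `K[x_1,…,x_n]`, determined on
monomials by `∂_i^{[j]}(x^a) = binom(a_i, j) • x^{a - j·e_i}` (zero when `a_i < j`). -/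
noncomputable def dpDeriv (K : Type*) [CommRing K] {n : ℕ} (i : Fin n) (j : ℕ) :
    MvPolynomial (Fin n) K →ₗ[K] MvPolynomial (Fin n) K :=
  (Finsupp.lsum K fun a : Fin n →₀ ℕ =>
    (((a i).choose j : K)) •
      (MvPolynomial.monomial (a - Finsupp.single i j) : K →ₗ[K] MvPolynomial (Fin n) K)) ∘ₗ
    (AddMonoidAlgebra.coeffLinearEquiv K).toLinearMap

/-- The `r`-th Euler operator `E_r = Σ_{i_1+⋯+i_n=r} x_1^{i_1}⋯x_n^{i_n} ∂_1^{[i_1]}⋯∂_n^{[i_n]}`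
on `K[x_1,…,x_n]`. -/
noncomputable def eulerOp (K : Type*) [CommRing K] (n : ℕ) (r : ℕ) :
    MvPolynomial (Fin n) K →ₗ[K] MvPolynomial (Fin n) K :=
  ∑ c ∈ Finset.Nat.antidiagonalTuple n r,
    LinearMap.mulLeft K (MvPolynomial.monomial (Finsupp.equivFunOnFinite.symm c) (1 : K)) ∘ₗ
      ((List.finRange n).map fun i => dpDeriv K i (c i)).prod


lemma vand {ι : Type*} [DecidableEq ι] (s : Finset ι) (a : ι → ℕ) :
    ∀ r : ℕ, ∑ c ∈ s.piAntidiag r, ∏ i ∈ s, (a i).choose (c i) = (∑ i ∈ s, a i).choose r := by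
  induction s using Finset.cons_induction with
  | empty =>
    intro r
    rcases Nat.eq_zero_or_pos r with rfl | hr
    · simp
    · rw [piAntidiag_empty_of_ne_zero hr.ne']
      simp [Nat.choose_eq_zero_of_lt hr]
  | cons i s hi ih =>
    intro r
    rw [piAntidiag_cons hi, sum_disjiUnion]
    have : ∀ p : ℕ × ℕ, p ∈ antidiagonal r →
        (∑ c ∈ (s.piAntidiag p.2).map (addRightEmbedding fun t => if t = i then p.1 else 0),
          ∏ j ∈ cons i s hi, (a j).choose (c j))
        = (a i).choose p.1 * (∑ j ∈ s, a j).choose p.2 := by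
      intro p _
      rw [sum_map]
      rw [← ih p.2, mul_sum]
      refine sum_congr rfl fun g hg => ?_
      simp only [mem_piAntidiag] at hg
      have hgi : g i = 0 := by
        by_contra h
        exact hi (hg.2 i h)
      rw [prod_cons]
      simp only [addRightEmbedding_apply]
      congr 1
      · simp [hgi]
      · refine prod_congr rfl fun j hj => ?_
        have : j ≠ i := fun h => hi (h ▸ hj)
        simp [this]
    rw [sum_congr rfl this, sum_cons, Nat.add_choose_eq]

lemma vand_tuple {n : ℕ} (a : Fin n → ℕ) (r : ℕ) :
    ∑ c ∈ Finset.Nat.antidiagonalTuple n r, ∏ i, (a i).choose (c i)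
      = (∑ i, a i).choose r := by
  rw [← Finset.piAntidiag_univ_fin_eq_antidiagonalTuple, vand]

lemma dpDeriv_monomial (K : Type*) [CommRing K] {n : ℕ} (i : Fin n) (j : ℕ)
    (a : Fin n →₀ ℕ) (k : K) :
    dpDeriv K i j (MvPolynomial.monomial a k) =
      (((a i).choose j : K)) • MvPolynomial.monomial (a - Finsupp.single i j) k := by
  rw [dpDeriv, LinearMap.comp_apply]
  erw [show (AddMonoidAlgebra.coeffLinearEquiv K).toLinearMap (MvPolynomial.monomial a k)
    = Finsupp.single a k from rfl]
  erw [Finsupp.lsum_single]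
  simp

lemma sum_single_apply_eq_zero {n : ℕ} (c : Fin n → ℕ) (L : List (Fin n)) (i : Fin n)
    (hi : i ∉ L) : ((L.map fun j => Finsupp.single j (c j)).sum) i = 0 := by
  induction L with
  | nil => simp
  | cons j L ih =>
    simp only [List.mem_cons, not_or] at hi
    simp [Finsupp.single_apply, Ne.symm hi.1, ih hi.2]

lemma prod_dpDeriv_monomial (K : Type*) [CommRing K] {n : ℕ} (c : Fin n → ℕ)
    (L : List (Fin n)) (hL : L.Nodup) (a : Fin n →₀ ℕ) (k : K) :
    ((L.map fun i => dpDeriv K i (c i)).prod) (MvPolynomial.monomial a k) =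
      (((L.map fun i => (a i).choose (c i)).prod : ℕ) : K) •
        MvPolynomial.monomial (a - (L.map fun j => Finsupp.single j (c j)).sum) k := by
  induction L with
  | nil => simp
  | cons i L ih =>
    rw [List.nodup_cons] at hL
    simp only [List.map_cons, List.prod_cons, List.sum_cons, Module.End.mul_apply,
      ih hL.2, map_smul, dpDeriv_monomial]
    have h1 : (a - (L.map fun j => Finsupp.single j (c j)).sum) i = a i := by
      simp [Finsupp.tsub_apply, sum_single_apply_eq_zero c L i hL.1]
    rw [h1, tsub_tsub, smul_smul, Nat.cast_mul, mul_comm ((a i).choose (c i) : K),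
      add_comm (Finsupp.single i (c i))]

lemma equivFunOnFinite_symm_eq_sum {n : ℕ} (c : Fin n → ℕ) :
    (Finsupp.equivFunOnFinite.symm c : Fin n →₀ ℕ) = ∑ i, Finsupp.single i (c i) := by
  ext j
  simp [Finsupp.finset_sum_apply, Finsupp.single_apply]

lemma eulerOp_monomial (K : Type*) [CommRing K] {n : ℕ} (r : ℕ) (a : Fin n →₀ ℕ) (k : K) :
    eulerOp K n r (MvPolynomial.monomial a k)
      = (((∑ i, a i).choose r : ℕ) : K) • MvPolynomial.monomial a k := by
  rw [eulerOp, LinearMap.sum_apply]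
  have key : ∀ c ∈ Finset.Nat.antidiagonalTuple n r,
      (LinearMap.mulLeft K (MvPolynomial.monomial (Finsupp.equivFunOnFinite.symm c) (1 : K)) ∘ₗ
        ((List.finRange n).map fun i => dpDeriv K i (c i)).prod) (MvPolynomial.monomial a k)
      = ((∏ i, (a i).choose (c i) : ℕ) : K) • MvPolynomial.monomial a k := by
    intro c _
    rw [LinearMap.comp_apply,
      prod_dpDeriv_monomial K c _ (List.nodup_finRange n), map_smul,
      LinearMap.mulLeft_apply, MvPolynomial.monomial_mul, one_mul]
    have hprod : ((List.finRange n).map fun i => (a i).choose (c i)).prod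
        = ∏ i, (a i).choose (c i) := by
      rw [Fin.prod_univ_def]
    have hsum : ((List.finRange n).map fun j => Finsupp.single j (c j)).sum
        = (Finsupp.equivFunOnFinite.symm c : Fin n →₀ ℕ) := by
      rw [equivFunOnFinite_symm_eq_sum, Fin.sum_univ_def]
    rw [hprod, hsum]
    by_cases h : ∀ i, c i ≤ a i
    · have heq : (Finsupp.equivFunOnFinite.symm c : Fin n →₀ ℕ)
          + (a - Finsupp.equivFunOnFinite.symm c) = a := by
        ext j
        have hcj : (Finsupp.equivFunOnFinite.symm c : Fin n →₀ ℕ) j = c j := rfl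
        simp only [Finsupp.add_apply, Finsupp.tsub_apply, hcj]
        exact Nat.add_sub_cancel' (h j)
      rw [heq]
    · push_neg at h
      obtain ⟨i, hi⟩ := h
      have : ∏ j, (a j).choose (c j) = 0 :=
        Finset.prod_eq_zero (Finset.mem_univ i) (Nat.choose_eq_zero_of_lt hi)
      rw [this]
      simp
  rw [Finset.sum_congr rfl key, ← Finset.sum_smul, ← Nat.cast_sum, vand_tuple]

lemma eulerOp_isHomogeneous (K : Type*) [CommRing K] {n : ℕ} (r d : ℕ)
    (f : MvPolynomial (Fin n) K) (hf : f.IsHomogeneous d) :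
    eulerOp K n r f = ((d.choose r : ℕ) : K) • f := by
  conv_lhs => rw [← f.support_sum_monomial_coeff]
  rw [map_sum]
  rw [Finset.sum_congr rfl (fun a ha => eulerOp_monomial K r a (f.coeff a))]
  have : ∀ a ∈ f.support, (((∑ i, a i).choose r : ℕ) : K) •
      MvPolynomial.monomial a (f.coeff a)
      = ((d.choose r : ℕ) : K) • MvPolynomial.monomial a (f.coeff a) := by
    intro a ha
    have hd : ∑ i, a i = d := by
      have := hf (MvPolynomial.mem_support_iff.mp ha)
      rw [← this]
      rw [Finsupp.weight_apply, Finsupp.sum_fintype]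
      · simp
      · simp
    rw [hd]
  rw [Finset.sum_congr rfl this, ← Finset.smul_sum, f.support_sum_monomial_coeff]

/-- Let `K` be a field, `n ≥ 1`, and `ℓ ∈ ℤ`.  Then every `r ≥ 1`, every
`d : ℕ`, and every nonzero homogeneous polynomial `f` of degree `d` satisfy
`E_r · f = binom(d − ℓ, r) • f` (the generalized integer binomial coefficient taken via its
image in `K`) if and only if `ℓ = 0`; i.e. the degree-shifted graded module `R(ℓ)` is
Eulerian if and only if `ℓ = 0`. -/
theorem shifted_R_eulerian_iff (K : Type*) [Field K] (n : ℕ) (hn : 1 ≤ n) (ℓ : ℤ) :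
    (∀ r : ℕ, 1 ≤ r → ∀ d : ℕ, ∀ f : MvPolynomial (Fin n) K, f ≠ 0 → f.IsHomogeneous d →
        eulerOp K n r f = ((Ring.choose ((d : ℤ) - ℓ) r : ℤ) : K) • f) ↔ ℓ = 0 := by
  constructor
  · intro H
    by_contra hl
    rcases lt_or_gt_of_ne hl with hneg | hpos
    · -- ℓ < 0 : take d = 0, r = (-ℓ).toNat, f = 1
      set r := (-ℓ).toNat with hr
      have hr1 : 1 ≤ r := by omega
      have hone : (1 : MvPolynomial (Fin n) K) ≠ 0 := one_ne_zero
      have hhom : (1 : MvPolynomial (Fin n) K).IsHomogeneous 0 :=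
        MvPolynomial.isHomogeneous_one _ _
      have h := H r hr1 0 1 hone hhom
      rw [eulerOp_isHomogeneous K r 0 1 hhom] at h
      have hcast : ((0 : ℕ) : ℤ) - ℓ = (r : ℤ) := by omega
      rw [Nat.choose_eq_zero_of_lt (by omega), hcast, Ring.choose_natCast,
        Nat.choose_self] at h
      simp at h
    · -- ℓ > 0 : take d = r = ℓ.toNat, f = x_0 ^ d
      set d := ℓ.toNat with hd
      have hd1 : 1 ≤ d := by omega
      set i0 : Fin n := ⟨0, hn⟩
      set f : MvPolynomial (Fin n) K := MvPolynomial.monomial (Finsupp.single i0 d) 1 with hf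
      have hf0 : f ≠ 0 := by
        simp [hf, MvPolynomial.monomial_eq_zero]
      have hhom : f.IsHomogeneous d := by
        apply MvPolynomial.isHomogeneous_monomial
        rw [Finsupp.degree_eq_weight_one, Finsupp.weight_apply, Finsupp.sum_single_index] <;> simp
      have h := H d hd1 d f hf0 hhom
      rw [eulerOp_isHomogeneous K d d f hhom, Nat.choose_self] at h
      have hcast : ((d : ℤ)) - ℓ = ((0 : ℕ) : ℤ) := by omega
      rw [hcast, Ring.choose_natCast, Nat.choose_eq_zero_of_lt (by omega)] at h
      simp at h
      exact hf0 h
  · rintro rfl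
    intro r hr d f hf0 hhom
    rw [eulerOp_isHomogeneous K r d f hhom]
    norm_num [Ring.choose_natCast]
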